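/- Let ≈ be an equinumerosity relation in which any two singletons are equinumerous. Then two finite sets A and B satisfy A ≈ B if and only if they have the same cardinality; moreover every infinite set is strictly greater (in the sense of ≺) than every finite set. -/

import Mathlib

/-- `A ≺ B` : there are `A' ⊂ B'` with `A ≈ A'` and `B ≈ B'`. -/
def SetPrec {α : Type*} (r : Set α → Set α → Prop) (A B : Set α) : Prop :=
  ∃ A' B' : Set α, A' ⊂ B' ∧ r A A' ∧ r B B'

theorem finite_equinumerosity {α : Type*} [Infinite α]
    (r : Set α → Set α → Prop)
    (hequiv : Equivalence r)
    (hAP : ∀ A B : Set α, r A B ↔ r (A \ B) (B \ A))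
    (hZP : ∀ A B : Set α,
      (r A B ∧ ¬ SetPrec r A B ∧ ¬ SetPrec r B A) ∨
      (¬ r A B ∧ SetPrec r A B ∧ ¬ SetPrec r B A) ∨
      (¬ r A B ∧ ¬ SetPrec r A B ∧ SetPrec r B A))
    (hsingle : ∀ a b : α, r {a} {b}) :
    (∀ A B : Set α, A.Finite → B.Finite → (r A B ↔ A.ncard = B.ncard)) ∧
    (∀ A X : Set α, A.Finite → X.Infinite → SetPrec r A X) := by
  obtain ⟨hrefl, hsymm, htrans⟩ := hequiv
  -- strict subset implies not r
  have hss : ∀ A B : Set α, A ⊂ B → ¬ r A B := by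
    intro A B hAB hr
    have hp : SetPrec r A B := ⟨A, B, hAB, hrefl A, hrefl B⟩
    rcases hZP A B with ⟨_, h2, _⟩ | ⟨h1, _, _⟩ | ⟨h1, _, _⟩
    · exact h2 hp
    · exact h1 hr
    · exact h1 hr
  -- adding a common fresh element preserves r
  have hadd : ∀ (A B : Set α) (a : α), a ∉ A → a ∉ B →
      (r (A ∪ {a}) (B ∪ {a}) ↔ r A B) := by
    intro A B a ha hb
    rw [hAP]
    have e1 : (A ∪ {a}) \ (B ∪ {a}) = A \ B := by
      ext x
      by_cases hxa : x = a <;> simp [hxa, ha, hb] <;> tauto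
    have e2 : (B ∪ {a}) \ (A ∪ {a}) = B \ A := by
      ext x
      by_cases hxa : x = a <;> simp [hxa, ha, hb] <;> tauto
    rw [e1, e2, ← hAP]
  -- swapping a fresh element for another
  have hswap : ∀ (B : Set α) (a b : α), a ∉ B → b ∉ B → a ≠ b →
      r (B ∪ {a}) (B ∪ {b}) := by
    intro B a b ha hb hab
    rw [hAP]
    have e1 : (B ∪ {a}) \ (B ∪ {b}) = {a} := by
      ext x
      by_cases hxa : x = a <;> simp [hxa, ha, hb, hab] <;> tauto
    have e2 : (B ∪ {b}) \ (B ∪ {a}) = {b} := by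
      ext x
      by_cases hxb : x = b <;> simp [hxb, ha, hb, Ne.symm hab] <;> tauto
    rw [e1, e2]
    exact hsingle a b
  -- finite sets of equal cardinality are related
  have key : ∀ (n : ℕ) (A B : Set α), A.Finite → B.Finite →
      A.ncard = n → B.ncard = n → r A B := by
    intro n
    induction n with
    | zero =>
      intro A B hA hB hnA hnB
      rw [Set.ncard_eq_zero hA] at hnA
      rw [Set.ncard_eq_zero hB] at hnB
      rw [hnA, hnB]
      exact hrefl _
    | succ n ih =>
      intro A B hA hB hnA hnB
      by_cases hAB : A \ B = ∅
      · have hsub : A ⊆ B := Set.diff_eq_empty.mp hAB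
        have : A = B := Set.eq_of_subset_of_ncard_le hsub (by omega) hB
        rw [this]; exact hrefl _
      · obtain ⟨a, haA, haB⟩ := Set.nonempty_iff_ne_empty.mpr hAB
        have hBA : (B \ A).Nonempty := by
          by_contra h
          have hsub : B ⊆ A := Set.diff_eq_empty.mp
            (Set.not_nonempty_iff_eq_empty.mp h)
          have : B = A := Set.eq_of_subset_of_ncard_le hsub (by omega) hA
          exact haB (this ▸ haA)
        obtain ⟨b, hbB, hbA⟩ := hBA
        have hab : a ≠ b := fun h => haB (h ▸ hbB)
        set A' := A \ {a} with hA'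
        set B' := B \ {b} with hB'
        have hA'fin : A'.Finite := hA.diff
        have hB'fin : B'.Finite := hB.diff
        have hnA' : A'.ncard = n := by
          rw [hA', Set.ncard_diff_singleton_of_mem haA, hnA]; omega
        have hnB' : B'.ncard = n := by
          rw [hB', Set.ncard_diff_singleton_of_mem hbB, hnB]; omega
        have hr1 : r A' B' := ih A' B' hA'fin hB'fin hnA' hnB'
        have haA' : a ∉ A' := by simp [hA']
        have haB' : a ∉ B' := fun h => haB h.1
        have hbB' : b ∉ B' := by simp [hB']
        have hr2 : r (A' ∪ {a}) (B' ∪ {a}) := (hadd A' B' a haA' haB').mpr hr1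
        have hr3 : r (B' ∪ {a}) (B' ∪ {b}) := hswap B' a b haB' hbB' hab
        have hr4 : r (A' ∪ {a}) (B' ∪ {b}) := htrans hr2 hr3
        have eA : A' ∪ {a} = A := Set.diff_union_of_subset (by simpa using haA)
        have eB : B' ∪ {b} = B := Set.diff_union_of_subset (by simpa using hbB)
        rwa [eA, eB] at hr4
  constructor
  · intro A B hA hB
    constructor
    · intro hr
      by_contra hne
      rcases Nat.lt_or_ge A.ncard B.ncard with hlt | hge
      · obtain ⟨B₀, hB₀sub, hB₀card⟩ := Set.exists_subset_card_eq hlt.le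
        have hB₀fin : B₀.Finite := hB.subset hB₀sub
        have hr1 : r A B₀ := key A.ncard A B₀ hA hB₀fin rfl hB₀card
        have hr2 : r B₀ B := htrans (hsymm hr1) hr
        have hssub : B₀ ⊂ B := hB₀sub.ssubset_of_ne
          (fun h => (by rw [h] at hB₀card; omega))
        exact hss B₀ B hssub hr2
      · have hlt : B.ncard < A.ncard := lt_of_le_of_ne hge (fun h => hne h.symm)
        obtain ⟨A₀, hA₀sub, hA₀card⟩ := Set.exists_subset_card_eq hlt.le
        have hA₀fin : A₀.Finite := hA.subset hA₀sub
        have hr1 : r B A₀ := key B.ncard B A₀ hB hA₀fin rfl hA₀card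
        have hr2 : r A₀ A := htrans (hsymm hr1) (hsymm hr)
        have hssub : A₀ ⊂ A := hA₀sub.ssubset_of_ne
          (fun h => (by rw [h] at hA₀card; omega))
        exact hss A₀ A hssub hr2
    · intro h
      exact key A.ncard A B hA hB rfl h.symm
  · intro A X hA hX
    obtain ⟨X₀, hX₀sub, hX₀fin, hX₀card⟩ := hX.exists_subset_ncard_eq A.ncard
    have hssub : X₀ ⊂ X := hX₀sub.ssubset_of_ne
      (fun h => hX (h ▸ hX₀fin))
    exact ⟨X₀, X, hssub, key A.ncard A X₀ hA hX₀fin rfl hX₀card, hrefl X⟩
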